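/- The function G₋ₘ is strictly concave on the interval [0,1]; in particular its second derivative G₋ₘ''(x) = −B t_m² ρⁱ_m exp(−B t_m ρⁱ_m x − φ_m)(2 + B t_m ρⁱ_m (1 − x)) − (B t_m ρᵒ_m)² ∑_{k≠m} Q_k exp(−B t_m ρᵒ_m x − Φ_k) is strictly negative for every x ∈ [0,1]. -/

import Mathlib

open Real Finset

lemma expAffine_hasDerivAt (a φ x : ℝ) :
    HasDerivAt (fun x => Real.exp (-(a * x) - φ)) (-a * Real.exp (-(a * x) - φ)) x := by
  have h := (((hasDerivAt_id x).const_mul a).neg.sub_const φ).exp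
  simp only [id_eq, mul_one, Pi.neg_apply] at h
  refine h.congr_deriv ?_
  ring

variable {ι : Type*}

lemma hasDerivAt_Gfun (A a φ b : ℝ) (Q Φ : ι → ℝ) (S : Finset ι) (x : ℝ) :
    HasDerivAt (fun x => A * (1 - x) * (1 - Real.exp (-(a * x) - φ)) +
        ∑ k ∈ S, Q k * (1 - Real.exp (-(b * x) - Φ k)))
      (-A * (1 - Real.exp (-(a * x) - φ)) + A * (1 - x) * (a * Real.exp (-(a * x) - φ))
        + ∑ k ∈ S, Q k * (b * Real.exp (-(b * x) - Φ k))) x := by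
  have h1 : HasDerivAt (fun x : ℝ => A * (1 - x)) (-A) x := by
    simpa using HasDerivAt.const_mul A ((hasDerivAt_id x).const_sub 1)
  have h2 : HasDerivAt (fun x => 1 - Real.exp (-(a * x) - φ))
      (a * Real.exp (-(a * x) - φ)) x := by
    have := (expAffine_hasDerivAt a φ x).const_sub 1
    refine this.congr_deriv ?_; ring
  have h3 : ∀ k ∈ S, HasDerivAt (fun x => Q k * (1 - Real.exp (-(b * x) - Φ k)))
      (Q k * (b * Real.exp (-(b * x) - Φ k))) x := by
    intro k _
    have := HasDerivAt.const_mul (Q k) ((expAffine_hasDerivAt b (Φ k) x).const_sub 1)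
    refine this.congr_deriv ?_; ring
  exact (h1.mul h2).add (HasDerivAt.fun_sum h3)

lemma hasDerivAt_Gfun' (A a φ b : ℝ) (Q Φ : ι → ℝ) (S : Finset ι) (x : ℝ) :
    HasDerivAt (fun x => -A * (1 - Real.exp (-(a * x) - φ))
        + A * (1 - x) * (a * Real.exp (-(a * x) - φ))
        + ∑ k ∈ S, Q k * (b * Real.exp (-(b * x) - Φ k)))
      (-(A * a) * Real.exp (-(a * x) - φ) * (2 + a * (1 - x))
        - b ^ 2 * ∑ k ∈ S, Q k * Real.exp (-(b * x) - Φ k)) x := by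
  have h1 : HasDerivAt (fun x => -A * (1 - Real.exp (-(a * x) - φ)))
      (-A * (a * Real.exp (-(a * x) - φ))) x := by
    have := HasDerivAt.const_mul (-A) ((expAffine_hasDerivAt a φ x).const_sub 1)
    refine this.congr_deriv ?_; ring
  have hA : HasDerivAt (fun x : ℝ => A * (1 - x)) (-A) x := by
    simpa using HasDerivAt.const_mul A ((hasDerivAt_id x).const_sub 1)
  have h2 : HasDerivAt (fun x => a * Real.exp (-(a * x) - φ))
      (a * (-a * Real.exp (-(a * x) - φ))) x :=
    HasDerivAt.const_mul a (expAffine_hasDerivAt a φ x)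
  have h3 : ∀ k ∈ S, HasDerivAt (fun x => Q k * (b * Real.exp (-(b * x) - Φ k)))
      (-(b ^ 2) * (Q k * Real.exp (-(b * x) - Φ k))) x := by
    intro k _
    have := HasDerivAt.const_mul (Q k)
      (HasDerivAt.const_mul b (expAffine_hasDerivAt b (Φ k) x))
    refine this.congr_deriv ?_; ring
  have := (h1.add (hA.mul h2)).add (HasDerivAt.fun_sum h3)
  refine this.congr_deriv ?_
  rw [← Finset.mul_sum]
  ring



/-- The single-group objective `G₋ₘ(x)` of problem P3: the offloading gain as a
function of the pushing probability `x` of group `m`, all other groups' pushing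
probabilities `c k` being fixed. -/
noncomputable def Gminus (M : ℕ) (B : ℝ) (t ρi ρo : Fin M → ℝ) (m : Fin M)
    (c : Fin M → ℝ) (x : ℝ) : ℝ :=
  t m * (1 - x) *
      (1 - Real.exp (-(B * t m * ρi m * x) -
        B * ∑ k ∈ Finset.univ.erase m, t k * ρo k * c k)) +
    ∑ k ∈ Finset.univ.erase m, t k * (1 - c k) *
      (1 - Real.exp (-(B * t m * ρo m * x) -
        (B * (∑ q ∈ (Finset.univ.erase m).erase k, t q * ρo q * c q) +
          B * t k * ρi k * c k)))

/-- `G₋ₘ` is strictly concave on `[0,1]`, and its second derivative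
is the stated expression, which is strictly negative on `[0,1]`. -/
theorem stmt_17 (M : ℕ) (hM : 1 ≤ M) (B : ℝ) (hB : 0 < B)
    (t ρi ρo : Fin M → ℝ) (ht : ∀ i, 0 < t i)
    (hρi : ∀ i, 0 < ρi i ∧ ρi i ≤ 1) (hρo : ∀ i, 0 < ρo i ∧ ρo i ≤ 1)
    (m : Fin M) (c : Fin M → ℝ) (hc : ∀ k, k ≠ m → 0 ≤ c k ∧ c k ≤ 1) :
    StrictConcaveOn ℝ (Set.Icc (0 : ℝ) 1) (Gminus M B t ρi ρo m c) ∧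
    ∀ x ∈ Set.Icc (0 : ℝ) 1,
      deriv (deriv (Gminus M B t ρi ρo m c)) x =
        -(B * (t m) ^ 2 * ρi m) *
            Real.exp (-(B * t m * ρi m * x) -
              B * ∑ k ∈ Finset.univ.erase m, t k * ρo k * c k) *
            (2 + B * t m * ρi m * (1 - x)) -
          (B * t m * ρo m) ^ 2 *
            ∑ k ∈ Finset.univ.erase m, t k * (1 - c k) *
              Real.exp (-(B * t m * ρo m * x) -
                (B * (∑ q ∈ (Finset.univ.erase m).erase k, t q * ρo q * c q) +
                  B * t k * ρi k * c k)) ∧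
      -(B * (t m) ^ 2 * ρi m) *
            Real.exp (-(B * t m * ρi m * x) -
              B * ∑ k ∈ Finset.univ.erase m, t k * ρo k * c k) *
            (2 + B * t m * ρi m * (1 - x)) -
          (B * t m * ρo m) ^ 2 *
            ∑ k ∈ Finset.univ.erase m, t k * (1 - c k) *
              Real.exp (-(B * t m * ρo m * x) -
                (B * (∑ q ∈ (Finset.univ.erase m).erase k, t q * ρo q * c q) +
                  B * t k * ρi k * c k)) < 0 := by
  classical
  -- notation
  set S : Finset (Fin M) := Finset.univ.erase m with hS
  have key1 := fun x => hasDerivAt_Gfun (ι := Fin M) (t m) (B * t m * ρi m)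
    (B * ∑ k ∈ S, t k * ρo k * c k) (B * t m * ρo m)
    (fun k => t k * (1 - c k))
    (fun k => B * (∑ q ∈ S.erase k, t q * ρo q * c q) + B * t k * ρi k * c k) S x
  have key2 := fun x => hasDerivAt_Gfun' (ι := Fin M) (t m) (B * t m * ρi m)
    (B * ∑ k ∈ S, t k * ρo k * c k) (B * t m * ρo m)
    (fun k => t k * (1 - c k))
    (fun k => B * (∑ q ∈ S.erase k, t q * ρo q * c q) + B * t k * ρi k * c k) S x
  have hd1 : deriv (Gminus M B t ρi ρo m c) = fun x =>
      -(t m) * (1 - Real.exp (-(B * t m * ρi m * x) - B * ∑ k ∈ S, t k * ρo k * c k))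
        + t m * (1 - x) * (B * t m * ρi m *
            Real.exp (-(B * t m * ρi m * x) - B * ∑ k ∈ S, t k * ρo k * c k))
        + ∑ k ∈ S, t k * (1 - c k) * (B * t m * ρo m *
            Real.exp (-(B * t m * ρo m * x) -
              (B * (∑ q ∈ S.erase k, t q * ρo q * c q) + B * t k * ρi k * c k))) := by
    funext x
    exact (key1 x).deriv
  have hd2 : ∀ x, deriv (deriv (Gminus M B t ρi ρo m c)) x =
      -(t m * (B * t m * ρi m)) *
          Real.exp (-(B * t m * ρi m * x) - B * ∑ k ∈ S, t k * ρo k * c k) *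
          (2 + B * t m * ρi m * (1 - x))
        - (B * t m * ρo m) ^ 2 * ∑ k ∈ S, t k * (1 - c k) *
            Real.exp (-(B * t m * ρo m * x) -
              (B * (∑ q ∈ S.erase k, t q * ρo q * c q) + B * t k * ρi k * c k)) := by
    intro x
    rw [hd1]
    exact (key2 x).deriv
  have hneg : ∀ x ∈ Set.Icc (0 : ℝ) 1,
      -(B * (t m) ^ 2 * ρi m) *
          Real.exp (-(B * t m * ρi m * x) - B * ∑ k ∈ S, t k * ρo k * c k) *
          (2 + B * t m * ρi m * (1 - x))
        - (B * t m * ρo m) ^ 2 * ∑ k ∈ S, t k * (1 - c k) *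
            Real.exp (-(B * t m * ρo m * x) -
              (B * (∑ q ∈ S.erase k, t q * ρo q * c q) + B * t k * ρi k * c k)) < 0 := by
    intro x hx
    obtain ⟨hx0, hx1⟩ := hx
    have htm := ht m
    have hρim := (hρi m).1
    have he1 : 0 < Real.exp (-(B * t m * ρi m * x) - B * ∑ k ∈ S, t k * ρo k * c k) :=
      Real.exp_pos _
    have hcoef : 0 < B * (t m) ^ 2 * ρi m := by positivity
    have hfac : 0 < 2 + B * t m * ρi m * (1 - x) := by
      have h1 : 0 ≤ B * t m * ρi m * (1 - x) := by
        have : (0:ℝ) ≤ 1 - x := by linarith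
        positivity
      linarith
    have hterm1 : 0 < B * (t m) ^ 2 * ρi m *
        Real.exp (-(B * t m * ρi m * x) - B * ∑ k ∈ S, t k * ρo k * c k) *
        (2 + B * t m * ρi m * (1 - x)) := by positivity
    have hsum : 0 ≤ ∑ k ∈ S, t k * (1 - c k) *
        Real.exp (-(B * t m * ρo m * x) -
          (B * (∑ q ∈ S.erase k, t q * ρo q * c q) + B * t k * ρi k * c k)) := by
      apply Finset.sum_nonneg
      intro k hk
      have hkm : k ≠ m := (Finset.mem_erase.mp hk).1
      have hck := (hc k hkm).2
      have h1 : (0:ℝ) ≤ 1 - c k := by linarith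
      have h2 := (ht k).le
      positivity
    have hterm2 : 0 ≤ (B * t m * ρo m) ^ 2 * ∑ k ∈ S, t k * (1 - c k) *
        Real.exp (-(B * t m * ρo m * x) -
          (B * (∑ q ∈ S.erase k, t q * ρo q * c q) + B * t k * ρi k * c k)) := by
      have : (0:ℝ) ≤ (B * t m * ρo m) ^ 2 := sq_nonneg _
      exact mul_nonneg this hsum
    nlinarith [hterm1, hterm2]
  have hd2' : ∀ x ∈ Set.Icc (0 : ℝ) 1,
      deriv (deriv (Gminus M B t ρi ρo m c)) x =
      -(B * (t m) ^ 2 * ρi m) *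
          Real.exp (-(B * t m * ρi m * x) - B * ∑ k ∈ S, t k * ρo k * c k) *
          (2 + B * t m * ρi m * (1 - x))
        - (B * t m * ρo m) ^ 2 * ∑ k ∈ S, t k * (1 - c k) *
            Real.exp (-(B * t m * ρo m * x) -
              (B * (∑ q ∈ S.erase k, t q * ρo q * c q) + B * t k * ρi k * c k)) := by
    intro x _
    rw [hd2 x]
    ring
  constructor
  · apply strictConcaveOn_of_deriv2_neg (convex_Icc 0 1)
    · exact fun x _ => (key1 x).continuousAt.continuousWithinAt
    · intro x hx
      rw [interior_Icc] at hx
      have hx' : x ∈ Set.Icc (0:ℝ) 1 := ⟨hx.1.le, hx.2.le⟩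
      have : deriv^[2] (Gminus M B t ρi ρo m c) x
          = deriv (deriv (Gminus M B t ρi ρo m c)) x := rfl
      rw [this, hd2' x hx']
      exact hneg x hx'
  · intro x hx
    exact ⟨hd2' x hx, hneg x hx⟩
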